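/- arXiv:2406.00963 — 2 statements merged into one kernel-verified Lean document; each statement's English description precedes it below -/
import Mathlib

section
/- For all subsets I, J ⊆ {1,…,n} and every totally positive n×n matrix A, both of the following hold: per(A_{I∪J,I∪J})·per(A_{I∩J,I∩J}) ≤ |I∪J|!·|I∩J|!·per(A_{I,I})·per(A_{J,J}), and per(A_{I,I})·per(A_{J,J}) ≤ |I|!·|J|!·per(A_{I∪J,I∪J})·per(A_{I∩J,I∩J}). -/
open Matrix BigOperators

/-- The permanent of a square real matrix. -/
def per {r : ℕ} (B : Matrix (Fin r) (Fin r) ℝ) : ℝ :=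
  ∑ σ : Equiv.Perm (Fin r), ∏ i, B i (σ i)

/-- An `n × n` real matrix is totally positive if all its minors are positive. -/
def TotallyPos {n : ℕ} (A : Matrix (Fin n) (Fin n) ℝ) : Prop :=
  ∀ (k : ℕ) (f g : Fin k → Fin n), StrictMono f → StrictMono g →
    0 < (A.submatrix f g).det

/-- The elements of a finset of `Fin n`, listed in increasing order. -/
def finEmb {n : ℕ} (I : Finset (Fin n)) : Fin I.card → Fin n :=
  fun i => ((I.orderIsoOfFin rfl) i : Fin n)

lemma entry_pos {n : ℕ} {A : Matrix (Fin n) (Fin n) ℝ} (hA : TotallyPos A)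
    (i j : Fin n) : 0 < A i j := by
  have h := hA 1 (fun _ => i) (fun _ => j)
    (Subsingleton.strictMono _) (Subsingleton.strictMono _)
  simpa [Matrix.det_fin_one] using h

lemma finEmb_strictMono {n : ℕ} (S : Finset (Fin n)) : StrictMono (finEmb S) := by
  intro a b h
  exact (S.orderIsoOfFin rfl).strictMono h

lemma prod_le_diag {n : ℕ} {A : Matrix (Fin n) (Fin n) ℝ} (hA : TotallyPos A) :
    ∀ (r : ℕ) (f : Fin r → Fin n), StrictMono f → ∀ σ : Equiv.Perm (Fin r),
      ∏ i, A (f i) (f (σ i)) ≤ ∏ i, A (f i) (f i) := by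
  intro r
  induction r with
  | zero => intro f hf σ; simp
  | succ r ih =>
    intro f hf σ
    set j := σ⁻¹ 0 with hj
    set σ' : Equiv.Perm (Fin (r + 1)) := σ * Equiv.swap j 0 with hσ'
    have hσj : σ j = 0 := Equiv.apply_symm_apply σ 0
    have hσ'0 : σ' 0 = 0 := by
      simp [hσ', Equiv.swap_apply_right, hσj]
    have step1 : ∏ i, A (f i) (f (σ i)) ≤ ∏ i, A (f i) (f (σ' i)) := by
      by_cases h0 : σ 0 = 0
      · have hj0 : j = 0 := by
          rw [hj]
          exact Equiv.Perm.inv_eq_iff_eq.mpr h0.symm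
        have heq : σ' = σ := by
          rw [hσ', hj0, Equiv.swap_self]
          rfl
        rw [heq]
      · have hjne : j ≠ 0 := fun hc =>
          h0 (Equiv.Perm.inv_eq_iff_eq.mp (hj.symm.trans hc)).symm
        set g : Fin (r + 1) → ℝ := fun i => A (f i) (f (σ i)) with hg
        set g' : Fin (r + 1) → ℝ := fun i => A (f i) (f (σ' i)) with hg'
        have hjmem : j ∈ (Finset.univ.erase (0 : Fin (r + 1))) :=
          Finset.mem_erase.mpr ⟨hjne, Finset.mem_univ j⟩
        rw [← Finset.mul_prod_erase _ g (Finset.mem_univ 0),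
            ← Finset.mul_prod_erase _ g hjmem,
            ← Finset.mul_prod_erase _ g' (Finset.mem_univ 0),
            ← Finset.mul_prod_erase _ g' hjmem]
        have hrest : ∏ x ∈ (Finset.univ.erase (0 : Fin (r+1))).erase j, g x =
            ∏ x ∈ (Finset.univ.erase (0 : Fin (r+1))).erase j, g' x := by
          refine Finset.prod_congr rfl fun x hx => ?_
          have hx1 : x ≠ j := (Finset.mem_erase.mp hx).1
          have hx2 : x ≠ 0 := (Finset.mem_erase.mp (Finset.mem_erase.mp hx).2).1
          simp [hg, hg', hσ', Equiv.swap_apply_of_ne_of_ne hx1 hx2]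
        rw [← hrest]
        have hrestpos : 0 < ∏ x ∈ (Finset.univ.erase (0 : Fin (r+1))).erase j, g x :=
          Finset.prod_pos fun x _ => entry_pos hA _ _
        have hkey : g 0 * g j ≤ g' 0 * g' j := by
          have h0pos : (0 : Fin (r + 1)) < j := Fin.pos_iff_ne_zero.mpr hjne
          have hσ0pos : (0 : Fin (r + 1)) < σ 0 := Fin.pos_iff_ne_zero.mpr h0
          have hrow : StrictMono ![f 0, f j] := by
            rw [Fin.strictMono_iff_lt_succ]
            intro i
            fin_cases i
            simpa using hf h0pos
          have hcol : StrictMono ![f 0, f (σ 0)] := by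
            rw [Fin.strictMono_iff_lt_succ]
            intro i
            fin_cases i
            simpa using hf hσ0pos
          have hdet := hA 2 ![f 0, f j] ![f 0, f (σ 0)] hrow hcol
          rw [Matrix.det_fin_two] at hdet
          simp only [Matrix.submatrix_apply, Matrix.cons_val_zero, Matrix.cons_val_one,
            Matrix.head_cons] at hdet
          have e0' : g' 0 = A (f 0) (f 0) := by
            show A (f 0) (f (σ' 0)) = _
            rw [hσ'0]
          have ej' : g' j = A (f j) (f (σ 0)) := by
            show A (f j) (f (σ' j)) = _
            have : σ' j = σ 0 := by
              rw [hσ', Equiv.Perm.mul_apply, Equiv.swap_apply_left]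
            rw [this]
          have e0 : g 0 = A (f 0) (f (σ 0)) := rfl
          have ej : g j = A (f j) (f 0) := by
            show A (f j) (f (σ j)) = _
            rw [hσj]
          rw [e0', ej', e0, ej]
          nlinarith
        calc g 0 * (g j * ∏ x ∈ (Finset.univ.erase (0 : Fin (r+1))).erase j, g x)
            = (g 0 * g j) * ∏ x ∈ (Finset.univ.erase (0 : Fin (r+1))).erase j, g x := by ring
          _ ≤ (g' 0 * g' j) * ∏ x ∈ (Finset.univ.erase (0 : Fin (r+1))).erase j, g x :=
              mul_le_mul_of_nonneg_right hkey hrestpos.le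
          _ = g' 0 * (g' j * ∏ x ∈ (Finset.univ.erase (0 : Fin (r+1))).erase j, g x) := by ring
    have step2 : ∏ i, A (f i) (f (σ' i)) ≤ ∏ i, A (f i) (f i) := by
      set τ := (Equiv.Perm.decomposeFin σ').2 with hτ
      have hσ'eq : Equiv.Perm.decomposeFin.symm ((Equiv.Perm.decomposeFin σ').1, τ) = σ' := by
        rw [hτ]
        exact Equiv.symm_apply_apply _ _
      have hp : (Equiv.Perm.decomposeFin σ').1 = 0 := by
        conv_rhs => rw [← hσ'0, ← hσ'eq]
        rw [Equiv.Perm.decomposeFin_symm_apply_zero]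
      have hsucc : ∀ i : Fin r, σ' i.succ = (τ i).succ := by
        intro i
        conv_lhs => rw [← hσ'eq]
        rw [Equiv.Perm.decomposeFin_symm_apply_succ, hp, Equiv.swap_self]
        rfl
      rw [Fin.prod_univ_succ, Fin.prod_univ_succ, hσ'0]
      have hmono : StrictMono (fun i : Fin r => f i.succ) :=
        hf.comp (fun a b h => Fin.succ_lt_succ_iff.mpr h)
      have := ih (fun i : Fin r => f i.succ) hmono τ
      simp only [hsucc]
      have hpos : 0 < A (f 0) (f 0) := entry_pos hA _ _
      exact mul_le_mul_of_nonneg_left this hpos.le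
    exact step1.trans step2

lemma diag_le_per {r : ℕ} {B : Matrix (Fin r) (Fin r) ℝ}
    (hpos : ∀ i j, 0 < B i j) : ∏ i, B i i ≤ per B := by
  have h1 : (∏ i, B i ((1 : Equiv.Perm (Fin r)) i)) = ∏ i, B i i := by simp
  rw [per, ← h1]
  exact Finset.single_le_sum (f := fun σ : Equiv.Perm (Fin r) => ∏ i, B i (σ i))
    (fun σ _ => Finset.prod_nonneg fun i _ => (hpos _ _).le)
    (Finset.mem_univ 1)

lemma per_le_diag {n r : ℕ} {A : Matrix (Fin n) (Fin n) ℝ} (hA : TotallyPos A)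
    (f : Fin r → Fin n) (hf : StrictMono f) :
    per (A.submatrix f f) ≤ (r.factorial : ℝ) * ∏ i, A (f i) (f i) := by
  have hcard : (Fintype.card (Equiv.Perm (Fin r)) : ℝ) = (r.factorial : ℝ) := by
    rw [Fintype.card_perm, Fintype.card_fin]
  rw [per, ← hcard]
  calc ∑ σ : Equiv.Perm (Fin r), ∏ i, (A.submatrix f f) i (σ i)
      ≤ ∑ _σ : Equiv.Perm (Fin r), ∏ i, A (f i) (f i) :=
        Finset.sum_le_sum fun σ _ => prod_le_diag hA r f hf σ
    _ = (Fintype.card (Equiv.Perm (Fin r)) : ℝ) * ∏ i, A (f i) (f i) := by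
        rw [Finset.sum_const, Finset.card_univ, nsmul_eq_mul]

lemma prod_finEmb {n : ℕ} (S : Finset (Fin n)) (g : Fin n → ℝ) :
    ∏ i, g (finEmb S i) = ∏ x ∈ S, g x := by
  rw [← Finset.prod_coe_sort S g]
  exact Equiv.prod_comp (S.orderIsoOfFin rfl).toEquiv (fun x : S => g ↑x)


theorem stmt8 (n : ℕ) (I J : Finset (Fin n)) (A : Matrix (Fin n) (Fin n) ℝ)
    (hA : TotallyPos A) :
    (per (A.submatrix (finEmb (I ∪ J)) (finEmb (I ∪ J))) *
        per (A.submatrix (finEmb (I ∩ J)) (finEmb (I ∩ J))) ≤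
      (Nat.factorial (I ∪ J).card : ℝ) * (Nat.factorial (I ∩ J).card : ℝ) *
        (per (A.submatrix (finEmb I) (finEmb I)) *
          per (A.submatrix (finEmb J) (finEmb J)))) ∧
    (per (A.submatrix (finEmb I) (finEmb I)) * per (A.submatrix (finEmb J) (finEmb J)) ≤
      (Nat.factorial I.card : ℝ) * (Nat.factorial J.card : ℝ) *
        (per (A.submatrix (finEmb (I ∪ J)) (finEmb (I ∪ J))) *
          per (A.submatrix (finEmb (I ∩ J)) (finEmb (I ∩ J))))) := by
  have hdiag : ∀ S : Finset (Fin n),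
      ∏ i, A (finEmb S i) (finEmb S i) = ∏ x ∈ S, A x x :=
    fun S => prod_finEmb S (fun x => A x x)
  have hdpos : ∀ S : Finset (Fin n), 0 < ∏ x ∈ S, A x x :=
    fun S => Finset.prod_pos fun x _ => entry_pos hA x x
  have hlow : ∀ S : Finset (Fin n),
      ∏ x ∈ S, A x x ≤ per (A.submatrix (finEmb S) (finEmb S)) := by
    intro S
    rw [← hdiag S]
    exact diag_le_per (B := A.submatrix (finEmb S) (finEmb S)) (fun i j => entry_pos hA _ _)
  have hup : ∀ S : Finset (Fin n),
      per (A.submatrix (finEmb S) (finEmb S)) ≤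
        (S.card.factorial : ℝ) * ∏ x ∈ S, A x x := by
    intro S
    rw [← hdiag S]
    exact per_le_diag hA _ (finEmb_strictMono S)
  have hppos : ∀ S : Finset (Fin n),
      0 < per (A.submatrix (finEmb S) (finEmb S)) :=
    fun S => lt_of_lt_of_le (hdpos S) (hlow S)
  have hunion : (∏ x ∈ I ∪ J, A x x) * ∏ x ∈ I ∩ J, A x x =
      (∏ x ∈ I, A x x) * ∏ x ∈ J, A x x := Finset.prod_union_inter
  have key : ∀ S T : Finset (Fin n),
      (∏ x ∈ S, A x x) * ∏ x ∈ T, A x x = (∏ x ∈ I, A x x) * ∏ x ∈ J, A x x →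
      per (A.submatrix (finEmb I) (finEmb I)) * per (A.submatrix (finEmb J) (finEmb J)) ≤
        (I.card.factorial : ℝ) * (J.card.factorial : ℝ) *
          (per (A.submatrix (finEmb S) (finEmb S)) *
            per (A.submatrix (finEmb T) (finEmb T))) := by
    intro S T hST
    calc per (A.submatrix (finEmb I) (finEmb I)) * per (A.submatrix (finEmb J) (finEmb J))
        ≤ ((I.card.factorial : ℝ) * ∏ x ∈ I, A x x) *
            ((J.card.factorial : ℝ) * ∏ x ∈ J, A x x) :=
          mul_le_mul (hup I) (hup J) (hppos J).le
            (mul_nonneg (Nat.cast_nonneg _) (hdpos I).le)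
      _ = (I.card.factorial : ℝ) * (J.card.factorial : ℝ) *
            ((∏ x ∈ S, A x x) * ∏ x ∈ T, A x x) := by rw [hST]; ring
      _ ≤ (I.card.factorial : ℝ) * (J.card.factorial : ℝ) *
            (per (A.submatrix (finEmb S) (finEmb S)) *
              per (A.submatrix (finEmb T) (finEmb T))) := by
          refine mul_le_mul_of_nonneg_left ?_
            (mul_nonneg (Nat.cast_nonneg _) (Nat.cast_nonneg _))
          exact mul_le_mul (hlow S) (hlow T) (hdpos T).le (hppos S).le
  constructor
  · -- swap the roles: apply `key` with I := I∪J, J := I∩J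
    have h2 : (∏ x ∈ I, A x x) * ∏ x ∈ J, A x x =
        (∏ x ∈ I ∪ J, A x x) * ∏ x ∈ I ∩ J, A x x := hunion.symm
    calc per (A.submatrix (finEmb (I ∪ J)) (finEmb (I ∪ J))) *
          per (A.submatrix (finEmb (I ∩ J)) (finEmb (I ∩ J)))
        ≤ (((I ∪ J).card.factorial : ℝ) * ∏ x ∈ I ∪ J, A x x) *
            (((I ∩ J).card.factorial : ℝ) * ∏ x ∈ I ∩ J, A x x) :=
          mul_le_mul (hup _) (hup _) (hppos _).le
            (mul_nonneg (Nat.cast_nonneg _) (hdpos _).le)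
      _ = ((I ∪ J).card.factorial : ℝ) * ((I ∩ J).card.factorial : ℝ) *
            ((∏ x ∈ I, A x x) * ∏ x ∈ J, A x x) := by rw [← hunion]; ring
      _ ≤ ((I ∪ J).card.factorial : ℝ) * ((I ∩ J).card.factorial : ℝ) *
            (per (A.submatrix (finEmb I) (finEmb I)) *
              per (A.submatrix (finEmb J) (finEmb J))) := by
          refine mul_le_mul_of_nonneg_left ?_
            (mul_nonneg (Nat.cast_nonneg _) (Nat.cast_nonneg _))
          exact mul_le_mul (hlow I) (hlow J) (hdpos J).le (hppos I).le
  · exact key (I ∪ J) (I ∩ J) hunion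
end

section
/- There exists a totally nonnegative 3×3 matrix A = (a_{i,j}) such that 3·per(A_{{1,3},{1,3}})·a_{2,2} < per(A); in fact the matrix with rows (1,1,0), (1,1,1), (1,1,1) is such a matrix. -/
open Matrix BigOperators

/-- An `n × n` real matrix is totally nonnegative if all its minors are nonnegative. -/
def TotallyNonneg {n : ℕ} (A : Matrix (Fin n) (Fin n) ℝ) : Prop :=
  ∀ (k : ℕ) (f g : Fin k → Fin n), StrictMono f → StrictMono g →
    0 ≤ (A.submatrix f g).det

def c3 : Equiv.Perm (Fin 3) := Equiv.mk ![1,2,0] ![2,0,1] (by decide) (by decide)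

lemma univ3 : (Finset.univ : Finset (Equiv.Perm (Fin 3))) =
    {1, Equiv.swap 0 1, Equiv.swap 0 2, Equiv.swap 1 2, c3, c3⁻¹} := by decide

lemma univ2 : (Finset.univ : Finset (Equiv.Perm (Fin 2))) = {1, Equiv.swap 0 1} := by decide

lemma per2 (B : Matrix (Fin 2) (Fin 2) ℝ) :
    per B = B 0 0 * B 1 1 + B 0 1 * B 1 0 := by
  rw [per, univ2]
  rw [Finset.sum_insert (by decide), Finset.sum_singleton]
  simp [Fin.prod_univ_two, Equiv.swap_apply_def]

lemma per3 (B : Matrix (Fin 3) (Fin 3) ℝ) :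
    per B = B 0 0 * B 1 1 * B 2 2 + B 0 1 * B 1 0 * B 2 2 + B 0 2 * B 1 1 * B 2 0
      + B 0 0 * B 1 2 * B 2 1 + B 0 1 * B 1 2 * B 2 0 + B 0 2 * B 1 0 * B 2 1 := by
  rw [per, univ3]
  rw [Finset.sum_insert (by decide), Finset.sum_insert (by decide),
    Finset.sum_insert (by decide), Finset.sum_insert (by decide),
    Finset.sum_insert (by decide), Finset.sum_singleton]
  have h1 : (c3 : Fin 3 → Fin 3) = ![1,2,0] := rfl
  have h2 : ((c3⁻¹ : Equiv.Perm (Fin 3)) : Fin 3 → Fin 3) = ![2,0,1] := rfl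
  simp [Fin.prod_univ_three, Equiv.swap_apply_def, h1, h2]
  ring

theorem stmt11 :
    ∃ A : Matrix (Fin 3) (Fin 3) ℝ,
      TotallyNonneg A ∧
      3 * (per (A.submatrix ![0, 2] ![0, 2]) * A 1 1) < per A ∧
      A = !![1, 1, 0; 1, 1, 1; 1, 1, 1] := by
  refine ⟨!![1, 1, 0; 1, 1, 1; 1, 1, 1], ?_, ?_, rfl⟩
  · intro k f g hf hg
    have hk : k ≤ 3 := by
      simpa using Fintype.card_le_of_injective f hf.injective
    interval_cases k
    · simp [Matrix.det_fin_zero]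
    · rw [Matrix.det_fin_one]
      have : ∀ i j : Fin 3, (0:ℝ) ≤ !![1, 1, 0; 1, 1, 1; 1, 1, 1] i j := by
        intro i j; fin_cases i <;> fin_cases j <;> norm_num
      exact this _ _
    · have h1 : f 0 < f 1 := hf (by decide)
      have h2 : g 0 < g 1 := hg (by decide)
      have hfc : (f 0 = 0 ∧ f 1 = 1) ∨ (f 0 = 0 ∧ f 1 = 2) ∨ (f 0 = 1 ∧ f 1 = 2) := by
        omega
      have hgc : (g 0 = 0 ∧ g 1 = 1) ∨ (g 0 = 0 ∧ g 1 = 2) ∨ (g 0 = 1 ∧ g 1 = 2) := by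
        omega
      rw [Matrix.det_fin_two]
      rcases hfc with ⟨e1, e2⟩ | ⟨e1, e2⟩ | ⟨e1, e2⟩ <;>
        rcases hgc with ⟨e3, e4⟩ | ⟨e3, e4⟩ | ⟨e3, e4⟩ <;>
        simp [e1, e2, e3, e4, Matrix.vecHead, Matrix.vecTail]
    · have hf0 : f 0 < f 1 := hf (by decide)
      have hf1 : f 1 < f 2 := hf (by decide)
      have hg0 : g 0 < g 1 := hg (by decide)
      have hg1 : g 1 < g 2 := hg (by decide)
      have ef0 : f 0 = 0 := by omega
      have ef1 : f 1 = 1 := by omega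
      have ef2 : f 2 = 2 := by omega
      have eg0 : g 0 = 0 := by omega
      have eg1 : g 1 = 1 := by omega
      have eg2 : g 2 = 2 := by omega
      rw [Matrix.det_fin_three]
      simp [ef0, ef1, ef2, eg0, eg1, eg2, Matrix.vecHead, Matrix.vecTail]
  · rw [per3, per2]
    norm_num [Matrix.vecHead, Matrix.vecTail]
    simp [Matrix.cons_val]
    norm_num
end
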